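/- Let 𝔗 be a tree ensemble over m real-valued features with K classes, with class scores W(c, x), where the prediction at x is c exactly when W(c, x) > W(c', x) for all classes c' ≠ c. Let v : Fin m → ℝ be an instance predicted as class c. Then a Finset X ⊆ Fin m is a weak AXp for the prediction (i.e., every x : Fin m → ℝ with x i = v i for all i ∈ X is also predicted as c) if and only if for every class c' ≠ c, the maximum of the (nonempty finite) set { W(c', x) − W(c, x) | x : Fin m → ℝ, x i = v i for all i ∈ X } is strictly negative. -/
import Mathlib


/-- Decision trees over `m` real-valued features with labels in `L`. -/
inductive DTree (m : ℕ) (L : Type) : Type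
  | leaf (c : L) : DTree m L
  | node (i : Fin m) (d : ℝ) (tl tr : DTree m L) : DTree m L

/-- Evaluation of a decision tree on an input point. -/
noncomputable def DTree.eval {m : ℕ} {L : Type} : DTree m L → (Fin m → ℝ) → L
  | .leaf c, _ => c
  | .node i d tl tr, x => if x i < d then tl.eval x else tr.eval x

/-- Class score of a tree ensemble: sum of the weights of the leaves reached in
the trees whose reached leaf carries class `c`. -/
noncomputable def ensembleScore {m n K : ℕ} (T : Fin n → DTree m (Fin K × ℝ))
    (c : Fin K) (x : Fin m → ℝ) : ℝ :=
  ∑ t ∈ Finset.univ.filter (fun t : Fin n => ((T t).eval x).1 = c), ((T t).eval x).2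

lemma evalRange_finite {m : ℕ} {L : Type} (t : DTree m L) :
    (Set.range t.eval).Finite := by
  induction t with
  | leaf c =>
    exact (Set.finite_singleton c).subset (by rintro _ ⟨x, rfl⟩; simp [DTree.eval])
  | node i d tl tr h1 h2 =>
    refine (h1.union h2).subset ?_
    rintro _ ⟨x, rfl⟩
    simp only [DTree.eval]
    split
    · exact Or.inl ⟨x, rfl⟩
    · exact Or.inr ⟨x, rfl⟩

lemma diffSet_finite {m n K : ℕ} (T : Fin n → DTree m (Fin K × ℝ))
    (c c' : Fin K) (P : (Fin m → ℝ) → Prop) :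
    ({r : ℝ | ∃ x : Fin m → ℝ, P x ∧
      r = ensembleScore T c' x - ensembleScore T c x} : Set ℝ).Finite := by
  have hpi : (Set.pi Set.univ (fun t : Fin n => Set.range (T t).eval)).Finite :=
    Set.Finite.pi (fun t => evalRange_finite (T t))
  have := hpi.image (fun e : Fin n → Fin K × ℝ =>
    (∑ t ∈ Finset.univ.filter (fun t : Fin n => (e t).1 = c'), (e t).2) -
    (∑ t ∈ Finset.univ.filter (fun t : Fin n => (e t).1 = c), (e t).2))
  refine this.subset ?_
  rintro _ ⟨x, -, rfl⟩
  exact ⟨fun t => (T t).eval x, fun t _ => ⟨x, rfl⟩, rfl⟩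

/-- A set `X` of features is a weak AXp for the prediction `c` at `v` (every input
agreeing with `v` on `X` is also predicted as `c`, i.e. `c` strictly dominates all
other classes) iff for every class `c' ≠ c` the maximum of the (nonempty finite)
set of score differences `W(c',x) − W(c,x)` over inputs agreeing with `v` on `X`
is strictly negative. -/
theorem waxp_iff_all_max_neg (m n K : ℕ) (T : Fin n → DTree m (Fin K × ℝ))
    (c : Fin K) (v : Fin m → ℝ)
    (hv : ∀ c' : Fin K, c' ≠ c → ensembleScore T c' v < ensembleScore T c v)
    (X : Finset (Fin m)) :
    (∀ c' : Fin K, c' ≠ c →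
        ({r : ℝ | ∃ x : Fin m → ℝ, (∀ i ∈ X, x i = v i) ∧
          r = ensembleScore T c' x - ensembleScore T c x} : Set ℝ).Nonempty ∧
        ({r : ℝ | ∃ x : Fin m → ℝ, (∀ i ∈ X, x i = v i) ∧
          r = ensembleScore T c' x - ensembleScore T c x} : Set ℝ).Finite) ∧
    ((∀ x : Fin m → ℝ, (∀ i ∈ X, x i = v i) →
        ∀ c' : Fin K, c' ≠ c → ensembleScore T c' x < ensembleScore T c x) ↔
      (∀ c' : Fin K, c' ≠ c →
        sSup {r : ℝ | ∃ x : Fin m → ℝ, (∀ i ∈ X, x i = v i) ∧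
          r = ensembleScore T c' x - ensembleScore T c x} < 0)) := by
  have hne : ∀ c' : Fin K,
      ({r : ℝ | ∃ x : Fin m → ℝ, (∀ i ∈ X, x i = v i) ∧
        r = ensembleScore T c' x - ensembleScore T c x} : Set ℝ).Nonempty :=
    fun c' => ⟨_, v, fun i _ => rfl, rfl⟩
  have hfin : ∀ c' : Fin K,
      ({r : ℝ | ∃ x : Fin m → ℝ, (∀ i ∈ X, x i = v i) ∧
        r = ensembleScore T c' x - ensembleScore T c x} : Set ℝ).Finite :=
    fun c' => diffSet_finite T c c' _
  refine ⟨fun c' _ => ⟨hne c', hfin c'⟩, ?_, ?_⟩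
  · intro h c' hc'
    obtain ⟨x, hx, hxe⟩ := (hne c').csSup_mem (hfin c')
    rw [hxe]
    exact sub_neg.2 (h x hx c' hc')
  · intro h x hx c' hc'
    have hmem : ensembleScore T c' x - ensembleScore T c x ∈
        {r : ℝ | ∃ x : Fin m → ℝ, (∀ i ∈ X, x i = v i) ∧
          r = ensembleScore T c' x - ensembleScore T c x} := ⟨x, hx, rfl⟩
    have := le_csSup ((hfin c').bddAbove) hmem
    have := this.trans_lt (h c' hc')
    linarith
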